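/- The number of matchings on [2n] whose sock number is at most 2 equals 3^{n−1} for n ≥ 1, where the sock number of a matching M is max_k x_k(M). -/

import Mathlib

open Finset
open scoped Classical

/-- An `r`-matching on `[r*n] = {1,...,r*n}`: a partition of `Finset.Icc 1 (r*n)`
into `r`-element blocks. -/
def IsRMatching (r n : ℕ) (M : Finset (Finset ℕ)) : Prop :=
  (∀ e ∈ M, e.card = r) ∧
  (∀ e ∈ M, ∀ f ∈ M, e ≠ f → Disjoint e f) ∧
  M.biUnion id = Finset.Icc 1 (r * n)

/-- The finite set of all `r`-matchings on `[r*n]`. -/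
noncomputable def matchings (r n : ℕ) : Finset (Finset (Finset ℕ)) :=
  ((Finset.Icc 1 (r * n)).powerset.powerset).filter (IsRMatching r n)

/-- `x_k(M) = Σ_{e ∈ M_k} |e ∩ [k]|`, summed over blocks `e` meeting both `[k]`
and its complement. -/
noncomputable def sockAt (k : ℕ) (M : Finset (Finset ℕ)) : ℕ :=
  ∑ e ∈ M.filter
      (fun e => (e ∩ Finset.Icc 1 k).Nonempty ∧ (e \ Finset.Icc 1 k).Nonempty),
    (e ∩ Finset.Icc 1 k).card

/-- For `r = 2`: the number of edges with one endpoint in `[k]` and one outside. -/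
noncomputable def crossAt (k : ℕ) (M : Finset (Finset ℕ)) : ℕ :=
  (M.filter
      (fun e => (e ∩ Finset.Icc 1 k).Nonempty ∧ (e \ Finset.Icc 1 k).Nonempty)).card

/-- The sock number of a matching on `[2n]`: `max_{1 ≤ k ≤ 2n} x_k(M)`. -/
noncomputable def sockNum (n : ℕ) (M : Finset (Finset ℕ)) : ℕ :=
  (Finset.Icc 1 (2 * n)).sup (fun k => crossAt k M)

lemma mem_matchings {r n : ℕ} {M : Finset (Finset ℕ)} :
    M ∈ matchings r n ↔ IsRMatching r n M := by
  constructor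
  · intro h; exact (Finset.mem_filter.mp h).2
  · intro h
    refine Finset.mem_filter.mpr ⟨?_, h⟩
    rw [Finset.mem_powerset]
    intro e he
    rw [Finset.mem_powerset]
    calc e ⊆ M.biUnion id := Finset.subset_biUnion_of_mem id he
      _ = Finset.Icc 1 (r * n) := h.2.2

lemma crossAt_le {k : ℕ} {M : Finset (Finset ℕ)}
    (hdisj : ∀ e ∈ M, ∀ f ∈ M, e ≠ f → Disjoint e f) : crossAt k M ≤ k := by
  classical
  have h : crossAt k M ≤ (Finset.Icc 1 k).card := by
    apply Finset.card_le_card_of_injOn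
      (fun e => if h : (e ∩ Finset.Icc 1 k).Nonempty then (e ∩ Finset.Icc 1 k).min' h else 0)
    · intro e he
      rw [Finset.mem_coe, Finset.mem_filter] at he
      rw [Finset.mem_coe]
      simp only [dif_pos he.2.1]
      exact Finset.mem_of_mem_inter_right ((e ∩ Finset.Icc 1 k).min'_mem he.2.1)
    · intro e he f hf hef
      rw [Finset.mem_coe, Finset.mem_filter] at he hf
      simp only [dif_pos he.2.1, dif_pos hf.2.1] at hef
      by_contra hne
      have h1 := Finset.mem_of_mem_inter_left ((e ∩ Finset.Icc 1 k).min'_mem he.2.1)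
      have h2 := Finset.mem_of_mem_inter_left ((f ∩ Finset.Icc 1 k).min'_mem hf.2.1)
      rw [hef] at h1
      exact (hdisj e he.1 f hf.1 hne).forall_ne_finset h1 h2 rfl
  simpa [Nat.card_Icc] using h

section Transfer

noncomputable def ins (σ : ℕ → ℕ) (p : Finset ℕ) (M : Finset (Finset ℕ)) : Finset (Finset ℕ) :=
  insert p (M.image (fun e => e.image σ))

noncomputable def del (τ : ℕ → ℕ) (p : Finset ℕ) (M : Finset (Finset ℕ)) : Finset (Finset ℕ) :=
  (M.erase p).image (fun e => e.image τ)

variable {σ τ : ℕ → ℕ} {p : Finset ℕ} {n : ℕ} {M : Finset (Finset ℕ)}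

lemma crossAt_ins (hσ : Function.Injective σ) (hσ1 : ∀ j, 1 ≤ j → 1 ≤ σ j)
    (hth : ∀ j k, 1 ≤ j → 1 ≤ k → (σ j ≤ k + 2 ↔ j ≤ k)) (hp3 : p ⊆ Finset.Icc 1 3)
    (hM : ∀ e ∈ M, ∀ x ∈ e, 1 ≤ x) {k : ℕ} (hk : 1 ≤ k) :
    crossAt (k + 2) (ins σ p M) = crossAt k M := by
  classical
  have hpk : ¬ ((p ∩ Finset.Icc 1 (k+2)).Nonempty ∧ (p \ Finset.Icc 1 (k+2)).Nonempty) := by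
    rintro ⟨-, x, hx⟩
    rw [Finset.mem_sdiff] at hx
    have := hp3 hx.1
    rw [Finset.mem_Icc] at this
    exact hx.2 (Finset.mem_Icc.mpr ⟨this.1, this.2.trans (by omega)⟩)
  have key : ∀ e ∈ M,
      (((e.image σ ∩ Finset.Icc 1 (k+2)).Nonempty ∧ (e.image σ \ Finset.Icc 1 (k+2)).Nonempty)
        ↔ ((e ∩ Finset.Icc 1 k).Nonempty ∧ (e \ Finset.Icc 1 k).Nonempty)) := by
    intro e he
    have hmem : ∀ x ∈ e, (σ x ∈ Finset.Icc 1 (k+2) ↔ x ∈ Finset.Icc 1 k) := by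
      intro x hx
      have h1 := hM e he x hx
      rw [Finset.mem_Icc, Finset.mem_Icc]
      constructor
      · rintro ⟨-, h⟩; exact ⟨h1, (hth x k h1 hk).mp h⟩
      · rintro ⟨-, h⟩; exact ⟨hσ1 x h1, (hth x k h1 hk).mpr h⟩
    constructor
    · rintro ⟨⟨a, ha⟩, ⟨b, hb⟩⟩
      rw [Finset.mem_inter, Finset.mem_image] at ha
      rw [Finset.mem_sdiff, Finset.mem_image] at hb
      obtain ⟨⟨x, hx, rfl⟩, ha2⟩ := ha
      obtain ⟨⟨y, hy, rfl⟩, hb2⟩ := hb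
      exact ⟨⟨x, Finset.mem_inter.mpr ⟨hx, (hmem x hx).mp ha2⟩⟩,
        ⟨y, Finset.mem_sdiff.mpr ⟨hy, fun h => hb2 ((hmem y hy).mpr h)⟩⟩⟩
    · rintro ⟨⟨a, ha⟩, ⟨b, hb⟩⟩
      rw [Finset.mem_inter] at ha
      rw [Finset.mem_sdiff] at hb
      exact ⟨⟨σ a, Finset.mem_inter.mpr ⟨Finset.mem_image_of_mem σ ha.1, (hmem a ha.1).mpr ha.2⟩⟩,
        ⟨σ b, Finset.mem_sdiff.mpr ⟨Finset.mem_image_of_mem σ hb.1,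
          fun h => hb.2 ((hmem b hb.1).mp h)⟩⟩⟩
  unfold crossAt ins
  rw [Finset.filter_insert, if_neg hpk, Finset.filter_image]
  rw [Finset.card_image_of_injective _ (Finset.image_injective hσ)]
  congr 1
  exact Finset.filter_congr (by intro e he; simpa using key e he)

end Transfer

section Transfer2

variable {σ τ : ℕ → ℕ} {p : Finset ℕ} {n : ℕ} {M : Finset (Finset ℕ)}

lemma biUnion_ins : (ins σ p M).biUnion id = p ∪ (M.biUnion id).image σ := by
  ext x
  simp only [ins, Finset.mem_biUnion, Finset.mem_insert, Finset.mem_union, Finset.mem_image,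
    id_eq]
  constructor
  · rintro ⟨e, (rfl | ⟨f, hf, rfl⟩), hx⟩
    · exact Or.inl hx
    · obtain ⟨a, ha, rfl⟩ := Finset.mem_image.mp hx
      exact Or.inr ⟨a, ⟨f, hf, ha⟩, rfl⟩
  · rintro (hx | ⟨a, ⟨f, hf, ha⟩, rfl⟩)
    · exact ⟨p, Or.inl rfl, hx⟩
    · exact ⟨f.image σ, Or.inr ⟨f, hf, rfl⟩, Finset.mem_image_of_mem σ ha⟩

lemma isRM_ins (hσ : Function.Injective σ) (hp2 : p.card = 2)
    (hpsub : p ⊆ Finset.Icc 1 (2 * (n+1)))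
    (himg : (Finset.Icc 1 (2*n)).image σ = Finset.Icc 1 (2*(n+1)) \ p)
    (hM : IsRMatching 2 n M) : IsRMatching 2 (n+1) (ins σ p M) := by
  obtain ⟨hc, hd, hu⟩ := hM
  have harc : ∀ e ∈ M, e.image σ ⊆ Finset.Icc 1 (2*(n+1)) \ p := by
    intro e he
    rw [← himg]
    exact Finset.image_subset_image (by
      calc e ⊆ M.biUnion id := Finset.subset_biUnion_of_mem id he
        _ = Finset.Icc 1 (2*n) := hu)
  refine ⟨?_, ?_, ?_⟩
  · intro e he
    rcases Finset.mem_insert.mp he with rfl | he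
    · exact hp2
    · obtain ⟨f, hf, rfl⟩ := Finset.mem_image.mp he
      rw [Finset.card_image_of_injective _ hσ]; exact hc f hf
  · intro e he f hf hef
    have hdp : ∀ g ∈ M, Disjoint p (g.image σ) := by
      intro g hg
      exact Disjoint.mono_right (harc g hg) Finset.sdiff_disjoint.symm
    simp only [ins, Finset.mem_insert] at he hf
    rcases he with heq | he <;> rcases hf with hfq | hf
    · exact absurd (heq.trans hfq.symm) hef
    · obtain ⟨f', hf', rfl⟩ := Finset.mem_image.mp hf
      rw [heq]
      exact hdp f' hf'
    · obtain ⟨e', he', rfl⟩ := Finset.mem_image.mp he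
      rw [hfq]
      exact (hdp e' he').symm
    · obtain ⟨e', he', rfl⟩ := Finset.mem_image.mp he
      obtain ⟨f', hf', rfl⟩ := Finset.mem_image.mp hf
      exact (Finset.disjoint_image hσ).mpr
        (hd e' he' f' hf' (fun h => hef (by rw [h])))
  · rw [biUnion_ins, hu, himg]
    exact Finset.union_sdiff_of_subset hpsub

lemma p_not_mem_image (hp0 : p.Nonempty)
    (himg : (Finset.Icc 1 (2*n)).image σ = Finset.Icc 1 (2*(n+1)) \ p)
    (hu : M.biUnion id = Finset.Icc 1 (2*n)) :
    p ∉ M.image (fun e => e.image σ) := by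
  intro h
  obtain ⟨e, he, hpe⟩ := Finset.mem_image.mp h
  obtain ⟨x, hx⟩ := hp0
  have hxe : x ∈ e.image σ := hpe ▸ hx
  have : e.image σ ⊆ Finset.Icc 1 (2*(n+1)) \ p := by
    rw [← himg]
    exact Finset.image_subset_image (by
      calc e ⊆ M.biUnion id := Finset.subset_biUnion_of_mem id he
        _ = Finset.Icc 1 (2*n) := hu)
  exact (Finset.mem_sdiff.mp (this hxe)).2 hx

lemma del_ins (hτ : ∀ j, 1 ≤ j → τ (σ j) = j) (hp0 : p.Nonempty)
    (himg : (Finset.Icc 1 (2*n)).image σ = Finset.Icc 1 (2*(n+1)) \ p)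
    (hu : M.biUnion id = Finset.Icc 1 (2*n)) :
    del τ p (ins σ p M) = M := by
  unfold del ins
  rw [Finset.erase_insert (p_not_mem_image hp0 himg hu), Finset.image_image]
  have : ∀ e ∈ M, ((fun e => Finset.image τ e) ∘ fun e => Finset.image σ e) e = id e := by
    intro e he
    simp only [Function.comp_apply, Finset.image_image, id]
    have h1 : ∀ x ∈ e, 1 ≤ x := by
      intro x hx
      have : x ∈ Finset.Icc 1 (2*n) := by
        rw [← hu]; exact Finset.mem_biUnion.mpr ⟨e, he, hx⟩
      exact (Finset.mem_Icc.mp this).1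
    calc e.image (τ ∘ σ) = e.image id := Finset.image_congr (fun x hx => hτ x (h1 x hx))
      _ = e := Finset.image_id
  rw [Finset.image_congr this, Finset.image_id]

end Transfer2

section Transfer3

variable {σ τ : ℕ → ℕ} {p : Finset ℕ} {n : ℕ} {M M' : Finset (Finset ℕ)}

lemma sockNum_ins (hσ : Function.Injective σ) (hσ1 : ∀ j, 1 ≤ j → 1 ≤ σ j)
    (hth : ∀ j k, 1 ≤ j → 1 ≤ k → (σ j ≤ k + 2 ↔ j ≤ k)) (hp3 : p ⊆ Finset.Icc 1 3)
    (hI : IsRMatching 2 (n+1) (ins σ p M))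
    (hM : IsRMatching 2 n M) (hs : sockNum n M ≤ 2) :
    sockNum (n+1) (ins σ p M) ≤ 2 := by
  have hM1 : ∀ e ∈ M, ∀ x ∈ e, 1 ≤ x := by
    intro e he x hx
    have : x ∈ Finset.Icc 1 (2*n) := by
      rw [← hM.2.2]; exact Finset.mem_biUnion.mpr ⟨e, he, hx⟩
    exact (Finset.mem_Icc.mp this).1
  apply Finset.sup_le
  intro k hk
  rw [Finset.mem_Icc] at hk
  by_cases h2 : k ≤ 2
  · exact (crossAt_le hI.2.1).trans h2
  · push_neg at h2
    obtain ⟨j, rfl⟩ : ∃ j, k = j + 2 := ⟨k - 2, by omega⟩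
    rw [crossAt_ins hσ hσ1 hth hp3 hM1 (by omega)]
    refine le_trans ?_ hs
    exact Finset.le_sup (f := fun k => crossAt k M) (s := Finset.Icc 1 (2*n))
      (Finset.mem_Icc.mpr ⟨by omega, by omega⟩)

lemma sigma_tau (hτ : ∀ j, 1 ≤ j → τ (σ j) = j)
    (himg : (Finset.Icc 1 (2*n)).image σ = Finset.Icc 1 (2*(n+1)) \ p) :
    ∀ x ∈ Finset.Icc 1 (2*(n+1)) \ p, σ (τ x) = x := by
  intro x hx
  rw [← himg] at hx
  obtain ⟨j, hj, rfl⟩ := Finset.mem_image.mp hx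
  rw [hτ j (Finset.mem_Icc.mp hj).1]

lemma erase_arc_sub (hM' : IsRMatching 2 (n+1) M') (hp : p ∈ M') :
    ∀ e ∈ M'.erase p, e ⊆ Finset.Icc 1 (2*(n+1)) \ p := by
  intro e he
  apply Finset.subset_sdiff.mpr
  constructor
  · calc e ⊆ M'.biUnion id := Finset.subset_biUnion_of_mem id (Finset.mem_of_mem_erase he)
      _ = Finset.Icc 1 (2*(n+1)) := hM'.2.2
  · exact hM'.2.1 e (Finset.mem_of_mem_erase he) p hp (Finset.ne_of_mem_erase he)

lemma ins_del (hτ : ∀ j, 1 ≤ j → τ (σ j) = j)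
    (himg : (Finset.Icc 1 (2*n)).image σ = Finset.Icc 1 (2*(n+1)) \ p)
    (hM' : IsRMatching 2 (n+1) M') (hp : p ∈ M') :
    ins σ p (del τ p M') = M' := by
  have hστ := sigma_tau hτ himg
  have harc := erase_arc_sub hM' hp
  unfold ins del
  rw [Finset.image_image]
  have key : ∀ e ∈ M'.erase p,
      ((fun e => Finset.image σ e) ∘ fun e => Finset.image τ e) e = id e := by
    intro e he
    simp only [Function.comp_apply, Finset.image_image, id]
    calc e.image (σ ∘ τ) = e.image id :=
          Finset.image_congr (fun x hx => hστ x (harc e he hx))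
      _ = e := Finset.image_id
  rw [Finset.image_congr key, Finset.image_id, Finset.insert_erase hp]

lemma isRM_del (hτ : ∀ j, 1 ≤ j → τ (σ j) = j)
    (himg : (Finset.Icc 1 (2*n)).image σ = Finset.Icc 1 (2*(n+1)) \ p)
    (hM' : IsRMatching 2 (n+1) M') (hp : p ∈ M') :
    IsRMatching 2 n (del τ p M') := by
  have hστ := sigma_tau hτ himg
  have harc := erase_arc_sub hM' hp
  have key : ∀ e ∈ M'.erase p, ∀ x ∈ e, σ (τ x) = x :=
    fun e he x hx => hστ x (harc e he hx)
  refine ⟨?_, ?_, ?_⟩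
  · intro e' he'
    obtain ⟨e, he, rfl⟩ := Finset.mem_image.mp he'
    rw [Finset.card_image_of_injOn (fun a ha b hb hab => by
      rw [← key e he a ha, ← key e he b hb, hab])]
    exact hM'.1 e (Finset.mem_of_mem_erase he)
  · intro e' he' f' hf' hef
    obtain ⟨e, he, rfl⟩ := Finset.mem_image.mp he'
    obtain ⟨f, hf, rfl⟩ := Finset.mem_image.mp hf'
    have hefne : e ≠ f := fun h => hef (by rw [h])
    rw [Finset.disjoint_left]
    intro x hx hxf
    obtain ⟨a, ha, rfl⟩ := Finset.mem_image.mp hx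
    obtain ⟨b, hb, hba⟩ := Finset.mem_image.mp hxf
    have : b = a := by rw [← key e he a ha, ← key f hf b hb, hba]
    exact (hM'.2.1 e (Finset.mem_of_mem_erase he) f (Finset.mem_of_mem_erase hf)
      hefne).forall_ne_finset ha (this ▸ hb) rfl
  · have h1 : (M'.erase p).biUnion id = Finset.Icc 1 (2*(n+1)) \ p := by
      apply Finset.Subset.antisymm
      · intro x hx
        obtain ⟨e, he, hxe⟩ := Finset.mem_biUnion.mp hx
        exact harc e he hxe
      · intro x hx
        rw [Finset.mem_sdiff] at hx
        have : x ∈ M'.biUnion id := by rw [hM'.2.2]; exact hx.1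
        obtain ⟨e, he, hxe⟩ := Finset.mem_biUnion.mp this
        refine Finset.mem_biUnion.mpr ⟨e, Finset.mem_erase.mpr ⟨?_, he⟩, hxe⟩
        rintro rfl; exact hx.2 hxe
    have h2 : (del τ p M').biUnion id = ((M'.erase p).biUnion id).image τ := by
      unfold del
      rw [Finset.image_biUnion]
      exact (Finset.biUnion_image (s := M'.erase p) (t := id) (f := τ)).symm
    rw [h2, h1, ← himg, Finset.image_image]
    calc (Finset.Icc 1 (2*n)).image (τ ∘ σ) = (Finset.Icc 1 (2*n)).image id :=
          Finset.image_congr (fun x hx => hτ x (Finset.mem_Icc.mp hx).1)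
      _ = Finset.Icc 1 (2*n) := Finset.image_id

lemma sockNum_del (hσ : Function.Injective σ) (hσ1 : ∀ j, 1 ≤ j → 1 ≤ σ j)
    (hth : ∀ j k, 1 ≤ j → 1 ≤ k → (σ j ≤ k + 2 ↔ j ≤ k)) (hp3 : p ⊆ Finset.Icc 1 3)
    (hτ : ∀ j, 1 ≤ j → τ (σ j) = j)
    (himg : (Finset.Icc 1 (2*n)).image σ = Finset.Icc 1 (2*(n+1)) \ p)
    (hM' : IsRMatching 2 (n+1) M') (hp : p ∈ M') (hs : sockNum (n+1) M' ≤ 2) :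
    sockNum n (del τ p M') ≤ 2 := by
  have hD := isRM_del hτ himg hM' hp
  have hD1 : ∀ e ∈ del τ p M', ∀ x ∈ e, 1 ≤ x := by
    intro e he x hx
    have : x ∈ Finset.Icc 1 (2*n) := by
      rw [← hD.2.2]; exact Finset.mem_biUnion.mpr ⟨e, he, hx⟩
    exact (Finset.mem_Icc.mp this).1
  apply Finset.sup_le
  intro k hk
  rw [Finset.mem_Icc] at hk
  have h1 : crossAt (k+2) (ins σ p (del τ p M')) = crossAt k (del τ p M') :=
    crossAt_ins hσ hσ1 hth hp3 hD1 hk.1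
  rw [ins_del hτ himg hM' hp] at h1
  rw [← h1]
  refine le_trans ?_ hs
  exact Finset.le_sup (f := fun k => crossAt k M') (s := Finset.Icc 1 (2*(n+1)))
    (Finset.mem_Icc.mpr ⟨by omega, by omega⟩)

lemma card_class (hσ : Function.Injective σ) (hσ1 : ∀ j, 1 ≤ j → 1 ≤ σ j)
    (hth : ∀ j k, 1 ≤ j → 1 ≤ k → (σ j ≤ k + 2 ↔ j ≤ k))
    (hτ : ∀ j, 1 ≤ j → τ (σ j) = j)
    (hp2 : p.card = 2) (hp3 : p ⊆ Finset.Icc 1 3)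
    (himg : (Finset.Icc 1 (2*n)).image σ = Finset.Icc 1 (2*(n+1)) \ p)
    (hn : 1 ≤ n) :
    ((matchings 2 (n+1)).filter (fun M => sockNum (n+1) M ≤ 2 ∧ p ∈ M)).card
      = ((matchings 2 n).filter (fun M => sockNum n M ≤ 2)).card := by
  have hp0 : p.Nonempty := Finset.card_pos.mp (by omega)
  have hpsub : p ⊆ Finset.Icc 1 (2*(n+1)) := by
    refine hp3.trans (Finset.Icc_subset_Icc le_rfl (by omega))
  apply Finset.card_nbij' (del τ p) (ins σ p)
  · intro M' hM'
    rw [Finset.mem_coe, Finset.mem_filter] at hM'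
    obtain ⟨hm, hs, hp⟩ := hM'
    rw [mem_matchings] at hm
    exact Finset.mem_filter.mpr ⟨mem_matchings.mpr (isRM_del hτ himg hm hp),
      sockNum_del hσ hσ1 hth hp3 hτ himg hm hp hs⟩
  · intro M hM
    rw [Finset.mem_coe, Finset.mem_filter] at hM
    obtain ⟨hm, hs⟩ := hM
    rw [mem_matchings] at hm
    have hI := isRM_ins hσ hp2 hpsub himg hm
    exact Finset.mem_filter.mpr ⟨mem_matchings.mpr hI,
      sockNum_ins hσ hσ1 hth hp3 hI hm hs, Finset.mem_insert_self _ _⟩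
  · intro M' hM'
    rw [Finset.mem_coe, Finset.mem_filter] at hM'
    obtain ⟨hm, _, hp⟩ := hM'
    rw [mem_matchings] at hm
    exact ins_del hτ himg hm hp
  · intro M hM
    rw [Finset.mem_coe, Finset.mem_filter] at hM
    obtain ⟨hm, _⟩ := hM
    rw [mem_matchings] at hm
    exact del_ins hτ hp0 himg hm.2.2

end Transfer3

section Classify

lemma same_arc {M : Finset (Finset ℕ)} (hd : ∀ e ∈ M, ∀ f ∈ M, e ≠ f → Disjoint e f)
    {e f : Finset ℕ} (he : e ∈ M) (hf : f ∈ M) {x : ℕ} (hxe : x ∈ e) (hxf : x ∈ f) :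
    e = f := by
  by_contra hne
  exact (hd e he f hf hne).forall_ne_finset hxe hxf rfl

lemma pair_eq {e : Finset ℕ} (hc : e.card = 2) {a b : ℕ} (ha : a ∈ e) (hb : b ∈ e)
    (hab : a ≠ b) : e = {a, b} := by
  have hsub : ({a, b} : Finset ℕ) ⊆ e := by
    intro x hx
    rcases Finset.mem_insert.mp hx with rfl | hx
    · exact ha
    · rw [Finset.mem_singleton] at hx; subst hx; exact hb
  exact (Finset.eq_of_subset_of_card_le hsub (by rw [hc, Finset.card_pair hab])).symm

lemma classify {m : ℕ} (hm : 2 ≤ m) {M : Finset (Finset ℕ)}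
    (hM : IsRMatching 2 m M) (hs : sockNum m M ≤ 2) :
    ({1, 2} : Finset ℕ) ∈ M ∨ ({2, 3} : Finset ℕ) ∈ M ∨ ({1, 3} : Finset ℕ) ∈ M := by
  obtain ⟨hc, hd, hu⟩ := hM
  have harc : ∀ x : ℕ, 1 ≤ x → x ≤ 2 * m → ∃ e ∈ M, x ∈ e := by
    intro x h1 h2
    have : x ∈ M.biUnion id := by rw [hu]; exact Finset.mem_Icc.mpr ⟨h1, h2⟩
    exact Finset.mem_biUnion.mp this
  obtain ⟨e1, he1, h1e1⟩ := harc 1 (by omega) (by omega)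
  obtain ⟨e2, he2, h2e2⟩ := harc 2 (by omega) (by omega)
  obtain ⟨e3, he3, h3e3⟩ := harc 3 (by omega) (by omega)
  by_cases h12 : e1 = e2
  · exact Or.inl (by rw [← pair_eq (hc e1 he1) h1e1 (h12 ▸ h2e2) (by omega)]; exact he1)
  by_cases h23 : e2 = e3
  · exact Or.inr (Or.inl (by rw [← pair_eq (hc e2 he2) h2e2 (h23 ▸ h3e3) (by omega)]; exact he2))
  by_cases h13 : e1 = e3
  · exact Or.inr (Or.inr (by rw [← pair_eq (hc e1 he1) h1e1 (h13 ▸ h3e3) (by omega)]; exact he1))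
  exfalso
  have hbig : ∀ x : ℕ, ∀ e ∈ M, x ∈ e → 1 ≤ x := by
    intro x e he hx
    have : x ∈ M.biUnion id := Finset.mem_biUnion.mpr ⟨e, he, hx⟩
    rw [hu] at this
    exact (Finset.mem_Icc.mp this).1
  have cross : ∀ e ∈ M, ∀ x ∈ e, x ≤ 3 → (∀ y ∈ e, y ≤ 3 → y = x) →
      e ∈ M.filter (fun e => (e ∩ Finset.Icc 1 3).Nonempty ∧ (e \ Finset.Icc 1 3).Nonempty) := by
    intro e he x hx hx3 huniq
    refine Finset.mem_filter.mpr ⟨he, ⟨x, Finset.mem_inter.mpr ⟨hx,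
      Finset.mem_Icc.mpr ⟨hbig x e he hx, hx3⟩⟩⟩, ?_⟩
    obtain ⟨b, hb, hbx⟩ := Finset.exists_mem_ne (by rw [hc e he]; omega) x
    refine ⟨b, Finset.mem_sdiff.mpr ⟨hb, ?_⟩⟩
    intro hmem
    exact hbx (huniq b hb (Finset.mem_Icc.mp hmem).2)
  -- each of e1 e2 e3 is crossing at 3
  have key1 : ∀ y ∈ e1, y ≤ 3 → y = 1 := by
    intro y hy hy3
    interval_cases y
    · exact absurd (hbig 0 e1 he1 hy) (by omega)
    · rfl
    · exact absurd (same_arc hd he1 he2 hy h2e2) h12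
    · exact absurd (same_arc hd he1 he3 hy h3e3) h13
  have key2 : ∀ y ∈ e2, y ≤ 3 → y = 2 := by
    intro y hy hy3
    interval_cases y
    · exact absurd (hbig 0 e2 he2 hy) (by omega)
    · exact absurd (same_arc hd he2 he1 hy h1e1) (fun h => h12 h.symm)
    · rfl
    · exact absurd (same_arc hd he2 he3 hy h3e3) h23
  have key3 : ∀ y ∈ e3, y ≤ 3 → y = 3 := by
    intro y hy hy3
    interval_cases y
    · exact absurd (hbig 0 e3 he3 hy) (by omega)
    · exact absurd (same_arc hd he3 he1 hy h1e1) (fun h => h13 h.symm)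
    · exact absurd (same_arc hd he3 he2 hy h2e2) (fun h => h23 h.symm)
    · rfl
  have hsub : ({e1, e2, e3} : Finset (Finset ℕ)) ⊆
      M.filter (fun e => (e ∩ Finset.Icc 1 3).Nonempty ∧ (e \ Finset.Icc 1 3).Nonempty) := by
    intro e he
    simp only [Finset.mem_insert, Finset.mem_singleton] at he
    rcases he with rfl | rfl | rfl
    · exact cross e he1 1 h1e1 (by omega) key1
    · exact cross e he2 2 h2e2 (by omega) key2
    · exact cross e he3 3 h3e3 (by omega) key3
  have hcard3 : ({e1, e2, e3} : Finset (Finset ℕ)).card = 3 := by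
    rw [Finset.card_insert_of_notMem (by simp [h12, h13]),
      Finset.card_insert_of_notMem (by simp [h23]), Finset.card_singleton]
  have hge : 3 ≤ crossAt 3 M := by
    have := Finset.card_le_card hsub
    rw [hcard3] at this
    exact this
  have hle : crossAt 3 M ≤ 2 := by
    refine le_trans ?_ hs
    exact Finset.le_sup (f := fun k => crossAt k M) (s := Finset.Icc 1 (2*m))
      (Finset.mem_Icc.mpr ⟨by omega, by omega⟩)
  omega

end Classify

section Instances

lemma himg0 {n : ℕ} (hn : 1 ≤ n) :
    (Finset.Icc 1 (2*n)).image (fun j => j + 2)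
      = Finset.Icc 1 (2*(n+1)) \ ({1, 2} : Finset ℕ) := by
  ext x
  simp only [Finset.mem_image, Finset.mem_Icc, Finset.mem_sdiff, Finset.mem_insert,
    Finset.mem_singleton]
  constructor
  · rintro ⟨j, hj, rfl⟩; omega
  · intro h; exact ⟨x - 2, by omega, by omega⟩

lemma himg1 {n : ℕ} (hn : 1 ≤ n) :
    (Finset.Icc 1 (2*n)).image (fun j => if j ≤ 1 then j else j + 2)
      = Finset.Icc 1 (2*(n+1)) \ ({2, 3} : Finset ℕ) := by
  ext x
  simp only [Finset.mem_image, Finset.mem_Icc, Finset.mem_sdiff, Finset.mem_insert,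
    Finset.mem_singleton]
  constructor
  · rintro ⟨j, hj, hjx⟩; split_ifs at hjx <;> omega
  · intro h
    refine ⟨if x ≤ 1 then x else x - 2, by split_ifs <;> omega, by split_ifs <;> omega⟩

lemma himg2 {n : ℕ} (hn : 1 ≤ n) :
    (Finset.Icc 1 (2*n)).image (fun j => if j = 0 then 0 else if j = 1 then 2 else j + 2)
      = Finset.Icc 1 (2*(n+1)) \ ({1, 3} : Finset ℕ) := by
  ext x
  simp only [Finset.mem_image, Finset.mem_Icc, Finset.mem_sdiff, Finset.mem_insert,
    Finset.mem_singleton]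
  constructor
  · rintro ⟨j, hj, hjx⟩; split_ifs at hjx <;> omega
  · intro h
    by_cases hx2 : x = 2
    · subst hx2
      exact ⟨1, ⟨le_rfl, by omega⟩, by norm_num⟩
    · refine ⟨x - 2, by omega, ?_⟩
      rw [if_neg (by omega : ¬ x - 2 = 0), if_neg (by omega : ¬ x - 2 = 1)]
      omega

lemma card_class0 {n : ℕ} (hn : 1 ≤ n) :
    ((matchings 2 (n+1)).filter
        (fun M => sockNum (n+1) M ≤ 2 ∧ ({1, 2} : Finset ℕ) ∈ M)).card
      = ((matchings 2 n).filter (fun M => sockNum n M ≤ 2)).card := by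
  apply card_class (σ := fun j => j + 2) (τ := fun j => j - 2)
  · intro a b h; (try dsimp only at h); omega
  · intro j h; (try dsimp only); omega
  · intro j k h1 h2; (try dsimp only); omega
  · intro j h; (try dsimp only); omega
  · decide
  · decide
  · exact himg0 hn
  · exact hn

lemma card_class1 {n : ℕ} (hn : 1 ≤ n) :
    ((matchings 2 (n+1)).filter
        (fun M => sockNum (n+1) M ≤ 2 ∧ ({2, 3} : Finset ℕ) ∈ M)).card
      = ((matchings 2 n).filter (fun M => sockNum n M ≤ 2)).card := by
  apply card_class (σ := fun j => if j ≤ 1 then j else j + 2)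
    (τ := fun j => if j ≤ 1 then j else j - 2)
  · intro a b h; (try dsimp only at h); split_ifs at h <;> omega
  · intro j h; (try dsimp only); split_ifs <;> omega
  · intro j k h1 h2; (try dsimp only); split_ifs <;> omega
  · intro j h; (try dsimp only); split_ifs <;> omega
  · decide
  · decide
  · exact himg1 hn
  · exact hn

lemma card_class2 {n : ℕ} (hn : 1 ≤ n) :
    ((matchings 2 (n+1)).filter
        (fun M => sockNum (n+1) M ≤ 2 ∧ ({1, 3} : Finset ℕ) ∈ M)).card
      = ((matchings 2 n).filter (fun M => sockNum n M ≤ 2)).card := by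
  apply card_class (σ := fun j => if j = 0 then 0 else if j = 1 then 2 else j + 2)
    (τ := fun j => if j = 2 then 1 else j - 2)
  · intro a b h; (try dsimp only at h); split_ifs at h <;> omega
  · intro j h; (try dsimp only); split_ifs <;> omega
  · intro j k h1 h2; (try dsimp only); split_ifs <;> omega
  · intro j h; (try dsimp only); split_ifs <;> omega
  · decide
  · decide
  · exact himg2 hn
  · exact hn

end Instances

lemma not_both {m : ℕ} {M : Finset (Finset ℕ)} (hM : IsRMatching 2 m M)
    {p q : Finset ℕ} (hp : p ∈ M) (hq : q ∈ M) (hne : p ≠ q) {x : ℕ}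
    (hxp : x ∈ p) (hxq : x ∈ q) : False :=
  hne (same_arc hM.2.1 hp hq hxp hxq)

lemma step (n : ℕ) (hn : 1 ≤ n) :
    ((matchings 2 (n+1)).filter (fun M => sockNum (n+1) M ≤ 2)).card
      = 3 * ((matchings 2 n).filter (fun M => sockNum n M ≤ 2)).card := by
  classical
  set F := (matchings 2 (n+1)).filter (fun M => sockNum (n+1) M ≤ 2) with hF
  have hsplit0 := Finset.card_filter_add_card_filter_not
    (s := F) (p := fun M => ({1,2} : Finset ℕ) ∈ M)
  set G := F.filter (fun M => ¬ ({1,2} : Finset ℕ) ∈ M) with hG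
  have hsplit1 := Finset.card_filter_add_card_filter_not
    (s := G) (p := fun M => ({2,3} : Finset ℕ) ∈ M)
  have e0 : F.filter (fun M => ({1,2} : Finset ℕ) ∈ M)
      = (matchings 2 (n+1)).filter
          (fun M => sockNum (n+1) M ≤ 2 ∧ ({1,2} : Finset ℕ) ∈ M) := by
    rw [hF, Finset.filter_filter]
  have e1 : G.filter (fun M => ({2,3} : Finset ℕ) ∈ M)
      = (matchings 2 (n+1)).filter
          (fun M => sockNum (n+1) M ≤ 2 ∧ ({2,3} : Finset ℕ) ∈ M) := by
    rw [hG, hF, Finset.filter_filter, Finset.filter_filter]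
    apply Finset.filter_congr
    intro M hM
    rw [mem_matchings] at hM
    constructor
    · rintro ⟨hs, -, h23⟩; exact ⟨hs, h23⟩
    · rintro ⟨hs, h23⟩
      refine ⟨hs, ?_, h23⟩
      intro h12
      exact not_both hM h12 h23 (by decide) (by decide : (2:ℕ) ∈ ({1,2} : Finset ℕ))
        (by decide : (2:ℕ) ∈ ({2,3} : Finset ℕ))
  have e2 : G.filter (fun M => ¬ ({2,3} : Finset ℕ) ∈ M)
      = (matchings 2 (n+1)).filter
          (fun M => sockNum (n+1) M ≤ 2 ∧ ({1,3} : Finset ℕ) ∈ M) := by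
    rw [hG, hF, Finset.filter_filter, Finset.filter_filter]
    apply Finset.filter_congr
    intro M hM
    rw [mem_matchings] at hM
    constructor
    · rintro ⟨hs, h12, h23⟩
      refine ⟨hs, ?_⟩
      rcases classify (by omega) hM hs with h | h | h
      · exact absurd h h12
      · exact absurd h h23
      · exact h
    · rintro ⟨hs, h13⟩
      refine ⟨hs, ?_, ?_⟩
      · intro h12
        exact not_both hM h12 h13 (by decide) (by decide : (1:ℕ) ∈ ({1,2} : Finset ℕ))
          (by decide : (1:ℕ) ∈ ({1,3} : Finset ℕ))
      · intro h23
        exact not_both hM h23 h13 (by decide) (by decide : (3:ℕ) ∈ ({2,3} : Finset ℕ))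
          (by decide : (3:ℕ) ∈ ({1,3} : Finset ℕ))
  rw [e0, card_class0 hn] at hsplit0
  rw [e1, card_class1 hn, e2, card_class2 hn] at hsplit1
  omega

lemma base_case :
    ((matchings 2 1).filter (fun M => sockNum 1 M ≤ 2)).card = 1 := by
  classical
  have hIcc : Finset.Icc 1 (2*1) = ({1, 2} : Finset ℕ) := by
    ext x
    simp only [Finset.mem_Icc, Finset.mem_insert, Finset.mem_singleton]
    omega
  have key : (matchings 2 1).filter (fun M => sockNum 1 M ≤ 2)
      = {({({1,2} : Finset ℕ)} : Finset (Finset ℕ))} := by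
    ext M
    simp only [Finset.mem_filter, Finset.mem_singleton]
    constructor
    · rintro ⟨hm, -⟩
      rw [mem_matchings] at hm
      obtain ⟨hc, hd, hu⟩ := hm
      have harc : ∀ e ∈ M, e = ({1,2} : Finset ℕ) := by
        intro e he
        have hsub : e ⊆ ({1,2} : Finset ℕ) := by
          rw [← hIcc, ← hu]
          exact Finset.subset_biUnion_of_mem id he
        apply Finset.eq_of_subset_of_card_le hsub
        rw [hc e he]
        decide
      have hne : M.Nonempty := by
        rcases Finset.eq_empty_or_nonempty M with rfl | h
        · exfalso
          have : (1:ℕ) ∈ (∅ : Finset (Finset ℕ)).biUnion id := by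
            rw [hu]; decide
          simp at this
        · exact h
      obtain ⟨e, he⟩ := hne
      apply Finset.Subset.antisymm
      · intro f hf
        rw [Finset.mem_singleton]
        exact harc f hf
      · intro f hf
        rw [Finset.mem_singleton] at hf
        rw [hf, ← harc e he]
        exact he
    · rintro rfl
      constructor
      · rw [mem_matchings]
        refine ⟨?_, ?_, ?_⟩
        · intro e he
          rw [Finset.mem_singleton] at he
          rw [he]; decide
        · intro e he f hf hef
          rw [Finset.mem_singleton] at he hf
          exact absurd (he.trans hf.symm) hef
        · rw [Finset.singleton_biUnion, hIcc]; rfl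
      · apply Finset.sup_le
        intro k hk
        rw [Finset.mem_Icc] at hk
        refine le_trans (crossAt_le ?_) (by omega)
        intro e he f hf hef
        rw [Finset.mem_singleton] at he hf
        exact absurd (he.trans hf.symm) hef
  rw [key, Finset.card_singleton]


theorem stmt15 (n : ℕ) (hn : 1 ≤ n) :
    ((matchings 2 n).filter (fun M => sockNum n M ≤ 2)).card = 3 ^ (n - 1) := by
  induction n, hn using Nat.le_induction with
  | base => simpa using base_case
  | succ n hn ih =>
    rw [step n hn, ih]
    have h1 : n + 1 - 1 = n := by omega
    have h2 : n - 1 + 1 = n := by omega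
    rw [h1, ← h2, pow_succ]
    exact Nat.mul_comm _ _
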